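/- Suppose N ∈ ℝ^{m×k} satisfies ‖K − NNᵀ‖_F² ≤ Δ₁·‖K − K_r‖_F² and ‖K − K_r‖_F ≤ n·β for some β with √Δ₁·n·β ≤ w/3. If a submatrix of K has all entries equal to integer multiples of w plus a known offset matrix O, then rounding the corresponding entries of NNᵀ − O to the nearest multiple of w exactly recovers that submatrix of K − O. -/

import Mathlib

open Matrix BigOperators

noncomputable def frob {m n : Type*} [Fintype m] [Fintype n] (M : Matrix m n ℝ) : ℝ :=
  Real.sqrt (∑ i, ∑ j, (M i j) ^ 2)

def IsBestRank {ι : Type*} [Fintype ι] [DecidableEq ι] (r : ℕ) (M Mr : Matrix ι ι ℝ) : Prop :=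
  Mr.rank ≤ r ∧ ∀ L : Matrix ι ι ℝ, L.rank ≤ r → frob (M - Mr) ≤ frob (M - L)

lemma frob_nonneg {m n : Type*} [Fintype m] [Fintype n] (M : Matrix m n ℝ) : 0 ≤ frob M :=
  Real.sqrt_nonneg _

lemma entry_le_frob {m n : Type*} [Fintype m] [Fintype n] (M : Matrix m n ℝ) (i : m) (j : n) :
    |M i j| ≤ frob M := by
  have h1 : (M i j) ^ 2 ≤ ∑ i, ∑ j, (M i j) ^ 2 := by
    have h2 : (M i j) ^ 2 ≤ ∑ j', (M i j') ^ 2 :=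
      Finset.single_le_sum (f := fun j' => (M i j')^2) (fun j' _ => sq_nonneg _) (Finset.mem_univ j)
    refine h2.trans ?_
    exact Finset.single_le_sum (f := fun i' => ∑ j', (M i' j')^2) (fun i' _ => Finset.sum_nonneg fun j' _ => sq_nonneg _)
      (Finset.mem_univ i)
  calc |M i j| = Real.sqrt ((M i j) ^ 2) := (Real.sqrt_sq_eq_abs _).symm
    _ ≤ frob M := Real.sqrt_le_sqrt h1

theorem stmt9 (m k r n : ℕ) (K : Matrix (Fin m) (Fin m) ℝ) (hK : K.PosSemidef)
    (Kr : Matrix (Fin m) (Fin m) ℝ) (hKr : IsBestRank r K Kr)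
    (N : Matrix (Fin m) (Fin k) ℝ) (Δ₁ β w : ℝ)
    (hΔ₁ : 1 ≤ Δ₁) (hβ : 0 < β) (hw : 0 < w)
    (happrox : frob (K - N * Nᵀ) ^ 2 ≤ Δ₁ * frob (K - Kr) ^ 2)
    (herr : frob (K - Kr) ≤ n * β)
    (hsmall : Real.sqrt Δ₁ * n * β ≤ w / 3)
    (S : Set (Fin m × Fin m)) (O : Matrix (Fin m) (Fin m) ℝ)
    (hint : ∀ p ∈ S, ∃ z : ℤ, K p.1 p.2 - O p.1 p.2 = w * z) :
    ∀ p ∈ S, w * (round (((N * Nᵀ) p.1 p.2 - O p.1 p.2) / w) : ℝ) =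
      K p.1 p.2 - O p.1 p.2 := by
  intro p hp
  obtain ⟨z, hz⟩ := hint p hp
  have hΔ0 : (0:ℝ) ≤ Δ₁ := by linarith
  have hfrob : frob (K - N * Nᵀ) ≤ w / 3 := by
    have h1 : frob (K - N * Nᵀ) ≤ Real.sqrt Δ₁ * frob (K - Kr) := by
      have := Real.sqrt_le_sqrt happrox
      rwa [Real.sqrt_sq (frob_nonneg _), Real.sqrt_mul hΔ0,
        Real.sqrt_sq (frob_nonneg _)] at this
    have h2 : Real.sqrt Δ₁ * frob (K - Kr) ≤ Real.sqrt Δ₁ * (n * β) :=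
      mul_le_mul_of_nonneg_left herr (Real.sqrt_nonneg _)
    calc frob (K - N * Nᵀ) ≤ Real.sqrt Δ₁ * (n * β) := h1.trans h2
      _ = Real.sqrt Δ₁ * n * β := by ring
      _ ≤ w / 3 := hsmall
  set E : ℝ := K p.1 p.2 - (N * Nᵀ) p.1 p.2 with hE
  have hEbound : |E| ≤ w / 3 := by
    have := entry_le_frob (K - N * Nᵀ) p.1 p.2
    simpa [Matrix.sub_apply, hE] using this.trans hfrob
  have hx : ((N * Nᵀ) p.1 p.2 - O p.1 p.2) / w = (z : ℝ) + (-E) / w := by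
    field_simp
    linarith [hz]
  rw [hx, round_intCast_add]
  have h0 : round ((-E) / w) = 0 := by
    rw [round_eq_zero_iff]
    constructor
    · rw [le_div_iff₀ hw]
      have := abs_le.mp hEbound
      nlinarith
    · rw [div_lt_iff₀ hw]
      have := abs_le.mp hEbound
      nlinarith
  rw [h0, add_zero, hz]
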